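/- Let Γ = γ^a v_a as above and let N ≥ 2. Then for each basis vector v_b (acting by contraction [v_b, ·] on the Λ•V factor, extended as a graded derivation): [v_b, Γ^N] = N [v_b, Γ] Γ^{N-1} + N(N-1) v_b Γ^{N-2}, where [v_b, Γ] = η_{ba} γ^a · 1 (the contraction of v_b with the vector part of Γ) and Γ^N denotes the N-th power in C(V) ⊗ Λ•V. -/
import Mathlib


noncomputable section

open scoped TensorProduct

/-- The Minkowski metric `η = diag(-1,1,1,1)` on `V = ℝ⁴` (it equals its own inverse). -/
def mink (a b : Fin 4) : ℝ := if a = b then (if a = 0 then -1 else 1) else 0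

/-- The exterior algebra `Λ•V` of `V = ℝ⁴`. -/
abbrev ExtV : Type := ExteriorAlgebra ℝ (Fin 4 → ℝ)

/-- The basis vector `v_a` of `V = ℝ⁴`. -/
def vb (a : Fin 4) : Fin 4 → ℝ := Pi.single a 1

/-- `Γ := γ^a ⊗ v_a ∈ C(V) ⊗ Λ•V`, with `γ^a = η^{ab} γ_b`. -/
def Gam {A : Type*} [Ring A] [Algebra ℝ A] (γ : Fin 4 → A) : A ⊗[ℝ] ExtV :=
  ∑ a : Fin 4, (∑ b : Fin 4, mink a b • γ b) ⊗ₜ[ℝ] (ExteriorAlgebra.ι ℝ (vb a))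

/-- The dual vector `η(v_b, ·)`. -/
def dualb (b : Fin 4) : Module.Dual ℝ (Fin 4 → ℝ) :=
  ∑ a : Fin 4, mink b a • LinearMap.proj a

/-- The contraction `[v_b, ·] := id_{C(V)} ⊗ (η(v_b,·) ⌋ ·)`, i.e. contraction with `v_b`
via `η` acting as an odd derivation on the `Λ•V` factor of `C(V) ⊗ Λ•V`. -/
def contrb (A : Type*) [Ring A] [Algebra ℝ A] (b : Fin 4) :
    A ⊗[ℝ] ExtV →ₗ[ℝ] A ⊗[ℝ] ExtV :=
  LinearMap.lTensor A
    (CliffordAlgebra.contractLeft (Q := (0 : QuadraticForm ℝ (Fin 4 → ℝ))) (dualb b))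

/-- Let `Γ = γ^a ⊗ v_a ∈ C(V) ⊗ Λ•V` and `N ≥ 2`.  Then for each basis
vector `v_b` (acting by contraction on the `Λ•V` factor, extended as a graded derivation):
`[v_b, Γ^N] = N [v_b, Γ] Γ^{N-1} + N(N-1) v_b Γ^{N-2}`,
where `[v_b, Γ] = η_{ba} γ^a ⊗ 1` and powers are taken in `C(V) ⊗ Λ•V`. -/
-- key derivation lemma on a single tmul-with-ι factor
lemma key {A : Type*} [Ring A] [Algebra ℝ A] (u : A) (m : Fin 4 → ℝ) (b : Fin 4)
    (x : A ⊗[ℝ] ExtV) :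
    contrb A b ((u ⊗ₜ[ℝ] ExteriorAlgebra.ι ℝ m) * x)
      = dualb b m • (((u ⊗ₜ[ℝ] (1 : ExtV))) * x)
        - (u ⊗ₜ[ℝ] ExteriorAlgebra.ι ℝ m) * contrb A b x := by
  induction x using TensorProduct.induction_on with
  | zero => simp only [mul_zero, LinearMap.map_zero, smul_zero, sub_zero]
  | tmul y z =>
      simp only [contrb, Algebra.TensorProduct.tmul_mul_tmul, LinearMap.lTensor_tmul,
        CliffordAlgebra.contractLeft_ι_mul, one_mul]
      rw [TensorProduct.tmul_sub, TensorProduct.tmul_smul, TensorProduct.smul_tmul']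
  | add p q hp hq =>
      simp only [mul_add, map_add, hp, hq, smul_add]
      abel

lemma hdual (a b : Fin 4) : dualb b (vb a) = mink b a := by
  fin_cases a <;> fin_cases b <;>
    simp [dualb, vb, Pi.single_apply, mink, Fin.sum_univ_four]


lemma derivGam {A : Type*} [Ring A] [Algebra ℝ A] (γ : Fin 4 → A) (b : Fin 4)
    (x : A ⊗[ℝ] ExtV) :
    contrb A b (Gam γ * x)
      = ((∑ a : Fin 4, mink b a • (∑ c : Fin 4, mink a c • γ c)) ⊗ₜ[ℝ] (1 : ExtV)) * x
        - Gam γ * contrb A b x := by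
  rw [Gam, Finset.sum_mul, map_sum]
  simp only [key, hdual]
  rw [Finset.sum_sub_distrib, ← Finset.sum_mul, TensorProduct.sum_tmul, Finset.sum_mul,
    Finset.sum_mul]
  congr 1
  refine Finset.sum_congr rfl fun a _ => ?_
  rw [← smul_mul_assoc, TensorProduct.smul_tmul']

lemma contrb_one {A : Type*} [Ring A] [Algebra ℝ A] (b : Fin 4) :
    contrb A b 1 = 0 := by
  rw [Algebra.TensorProduct.one_def, contrb, LinearMap.lTensor_tmul,
    CliffordAlgebra.contractLeft_one, TensorProduct.tmul_zero]

lemma hDG {A : Type*} [Ring A] [Algebra ℝ A] (γ : Fin 4 → A) (b : Fin 4) :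
    contrb A b (Gam γ)
      = (∑ a : Fin 4, mink b a • (∑ c : Fin 4, mink a c • γ c)) ⊗ₜ[ℝ] (1 : ExtV) := by
  have h := derivGam γ b 1
  rwa [mul_one, mul_one, contrb_one, mul_zero, sub_zero] at h

lemma minksum (a b : Fin 4) :
    ∑ e : Fin 4, mink a e * (-2 * mink b e) = if a = b then (-2 : ℝ) else 0 := by
  fin_cases a <;> fin_cases b <;> simp [mink, Fin.sum_univ_four]

lemma hcform {A : Type*} [Ring A] [Algebra ℝ A] (γ : Fin 4 → A) (b : Fin 4) :
    (∑ a : Fin 4, mink b a • (∑ c : Fin 4, mink a c • γ c)) = γ b := by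
  fin_cases b <;> simp [mink, Fin.sum_univ_four]

lemma gcomm {A : Type*} [Ring A] [Algebra ℝ A] (γ : Fin 4 → A)
    (hcl : ∀ a b : Fin 4, γ a * γ b + γ b * γ a = (-2 * mink a b) • (1 : A))
    (a b : Fin 4) :
    γ b * (∑ e : Fin 4, mink a e • γ e) + (∑ e : Fin 4, mink a e • γ e) * γ b
      = (if a = b then (-2 : ℝ) else 0) • (1 : A) := by
  rw [Finset.mul_sum, Finset.sum_mul, ← Finset.sum_add_distrib]
  have h : ∀ e : Fin 4, γ b * (mink a e • γ e) + (mink a e • γ e) * γ b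
      = (mink a e * (-2 * mink b e)) • (1 : A) := by
    intro e
    rw [mul_smul_comm, smul_mul_assoc, ← smul_add, hcl b e, smul_smul]
  rw [Finset.sum_congr rfl fun e _ => h e, ← Finset.sum_smul, minksum]

lemma hCG {A : Type*} [Ring A] [Algebra ℝ A] (γ : Fin 4 → A)
    (hcl : ∀ a b : Fin 4, γ a * γ b + γ b * γ a = (-2 * mink a b) • (1 : A))
    (b : Fin 4) :
    (γ b ⊗ₜ[ℝ] (1 : ExtV)) * Gam γ + Gam γ * (γ b ⊗ₜ[ℝ] (1 : ExtV))
      = (-2 : ℝ) • ((1 : A) ⊗ₜ[ℝ] ExteriorAlgebra.ι ℝ (vb b)) := by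
  rw [Gam, Finset.mul_sum, Finset.sum_mul, ← Finset.sum_add_distrib]
  have h : ∀ a : Fin 4,
      (γ b ⊗ₜ[ℝ] (1 : ExtV)) * ((∑ c : Fin 4, mink a c • γ c) ⊗ₜ[ℝ] ExteriorAlgebra.ι ℝ (vb a))
        + ((∑ c : Fin 4, mink a c • γ c) ⊗ₜ[ℝ] ExteriorAlgebra.ι ℝ (vb a)) * (γ b ⊗ₜ[ℝ] (1 : ExtV))
      = (if a = b then (-2 : ℝ) else 0) • ((1 : A) ⊗ₜ[ℝ] ExteriorAlgebra.ι ℝ (vb a)) := by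
    intro a
    rw [Algebra.TensorProduct.tmul_mul_tmul, Algebra.TensorProduct.tmul_mul_tmul,
      one_mul, mul_one, ← TensorProduct.add_tmul, gcomm γ hcl a b,
      ite_smul, zero_smul, ite_smul, zero_smul]
    by_cases hab : a = b <;> simp [hab, TensorProduct.smul_tmul', TensorProduct.neg_tmul]
  rw [Finset.sum_congr rfl fun a _ => h a]
  simp only [ite_smul, zero_smul]
  rw [Finset.sum_ite_eq' Finset.univ b
    (fun a => (-2 : ℝ) • ((1 : A) ⊗ₜ[ℝ] ExteriorAlgebra.ι ℝ (vb a)))]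
  simp

lemma hGE {A : Type*} [Ring A] [Algebra ℝ A] (γ : Fin 4 → A) (b : Fin 4) :
    Gam γ * ((1 : A) ⊗ₜ[ℝ] ExteriorAlgebra.ι ℝ (vb b))
      = -(((1 : A) ⊗ₜ[ℝ] ExteriorAlgebra.ι ℝ (vb b)) * Gam γ) := by
  rw [Gam, Finset.sum_mul, Finset.mul_sum, ← Finset.sum_neg_distrib]
  refine Finset.sum_congr rfl fun a _ => ?_
  rw [Algebra.TensorProduct.tmul_mul_tmul, Algebra.TensorProduct.tmul_mul_tmul,
    one_mul, mul_one, ← TensorProduct.tmul_neg]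
  congr 1
  exact eq_neg_of_add_eq_zero_left (ExteriorAlgebra.ι_add_mul_swap _ _)

set_option maxHeartbeats 1000000 in
lemma mainpow {A : Type*} [Ring A] [Algebra ℝ A] (γ : Fin 4 → A)
    (hcl : ∀ a b : Fin 4, γ a * γ b + γ b * γ a = (-2 * mink a b) • (1 : A))
    (b : Fin 4) (n : ℕ) :
    contrb A b (Gam γ ^ (n + 2))
      = ((n + 2 : ℕ) : ℝ) • ((γ b ⊗ₜ[ℝ] (1 : ExtV)) * Gam γ ^ (n + 1))
        + (((n + 2 : ℕ) : ℝ) * (((n + 2 : ℕ) : ℝ) - 1)) •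
            (((1 : A) ⊗ₜ[ℝ] ExteriorAlgebra.ι ℝ (vb b)) * Gam γ ^ n) := by
  set G := Gam γ with hG
  set Cb := γ b ⊗ₜ[ℝ] (1 : ExtV) with hCb
  set E := (1 : A) ⊗ₜ[ℝ] ExteriorAlgebra.ι ℝ (vb b) with hE
  have hDGCb : contrb A b G = Cb := by rw [hG, hDG γ b, hcform]
  have hder : ∀ x, contrb A b (G * x) = Cb * x - G * contrb A b x := by
    intro x
    rw [hG, derivGam γ b x, hcform]
  have hGC : G * Cb = (-2 : ℝ) • E - Cb * G := eq_sub_of_add_eq' (hCG γ hcl b)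
  have hge : G * E = -(E * G) := hGE γ b
  induction n with
  | zero =>
      have e0 : G ^ (0 + 2) = G * G := pow_two G
      rw [e0, hder, hDGCb, hGC]
      rw [pow_one, pow_zero, mul_one, show ((0 + 2 : ℕ) : ℝ) = 2 by norm_num]
      module
  | succ n ih =>
      have e0 : G ^ (n + 1 + 2) = G * G ^ (n + 2) := pow_succ' G (n + 2)
      have e1 : G * G ^ (n + 1) = G ^ (n + 2) := (pow_succ' G (n + 1)).symm
      have e2 : G * G ^ n = G ^ (n + 1) := (pow_succ' G n).symm
      rw [e0, hder, ih, mul_add, mul_smul_comm, mul_smul_comm, ← mul_assoc, ← mul_assoc,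
        hGC, hge, sub_mul, smul_mul_assoc, neg_mul, mul_assoc, mul_assoc, e1, e2,
        show ((n + 1 + 2 : ℕ) : ℝ) = ((n + 2 : ℕ) : ℝ) + 1 by push_cast; ring]
      module

theorem contraction_gamma_power {A : Type*} [Ring A] [Algebra ℝ A]
    (γ : Fin 4 → A)
    (hcl : ∀ a b : Fin 4, γ a * γ b + γ b * γ a = (-2 * mink a b) • (1 : A))
    (b : Fin 4) (N : ℕ) (hN : 2 ≤ N) :
    contrb A b (Gam γ ^ N)
      = (N : ℝ) • (contrb A b (Gam γ) * Gam γ ^ (N - 1))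
        + ((N : ℝ) * ((N : ℝ) - 1)) •
            (((1 : A) ⊗ₜ[ℝ] ExteriorAlgebra.ι ℝ (vb b)) * Gam γ ^ (N - 2))
    ∧ contrb A b (Gam γ)
        = (∑ a : Fin 4, mink b a • (∑ c : Fin 4, mink a c • γ c)) ⊗ₜ[ℝ] (1 : ExtV) := by
  obtain ⟨k, rfl⟩ : ∃ k, N = k + 2 := ⟨N - 2, by omega⟩
  refine ⟨?_, hDG γ b⟩
  rw [hDG γ b, hcform, show k + 2 - 1 = k + 1 from rfl, show k + 2 - 2 = k from rfl]
  exact mainpow γ hcl b k
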